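/- For every natural number n ≥ 1 and every real c > 1, one has n · ∫_0^1 f_c(x) dx − c/(c−1) ≤ Σ_{i=1}^{n−1} f_c(i/n) ≤ n · ∫_0^1 f_c(x) dx, where the integral is taken over the open interval (0,1) (f_c is bounded and monotone there, hence integrable). -/

import Mathlib

open Set Finset MeasureTheory

namespace CMQAux

noncomputable def P (ε x : ℝ) : ℝ := 1 - ε + ε * x
noncomputable def q (k : ℕ) (ε x : ℝ) : ℝ := (∑ j ∈ Finset.range (k-1), x^j) + ε * x^(k-1)
noncomputable def r (k : ℕ) (ε x : ℝ) : ℝ := (∑ j ∈ Finset.range k, x^j) + ε * x^k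
noncomputable def g (k : ℕ) (ε x : ℝ) : ℝ := x^(k-1) * P ε x
noncomputable def G (k : ℕ) (ε x : ℝ) : ℝ := g k ε x * r k ε x / q k ε x

variable {k : ℕ} {ε x y : ℝ}

lemma P_nonneg (hε0 : 0 ≤ ε) (hε1 : ε ≤ 1) (hx : 0 ≤ x) : 0 ≤ P ε x := by
  unfold P; nlinarith [mul_nonneg hε0 hx]

lemma P_mono (hε0 : 0 ≤ ε) (hxy : x ≤ y) : P ε x ≤ P ε y := by
  unfold P; nlinarith

lemma g_nonneg (hε0 : 0 ≤ ε) (hε1 : ε ≤ 1) (hx : 0 ≤ x) : 0 ≤ g k ε x :=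
  mul_nonneg (pow_nonneg hx _) (P_nonneg hε0 hε1 hx)

lemma g_mono (hε0 : 0 ≤ ε) (hε1 : ε ≤ 1) (hx : 0 ≤ x) (hxy : x ≤ y) :
    g k ε x ≤ g k ε y :=
  mul_le_mul (pow_le_pow_left₀ hx hxy _) (P_mono hε0 hxy) (P_nonneg hε0 hε1 hx)
    (pow_nonneg (hx.trans hxy) _)

lemma q_nonneg (hε0 : 0 ≤ ε) (hx : 0 ≤ x) : 0 ≤ q k ε x := by
  unfold q
  have h1 : (0:ℝ) ≤ ∑ j ∈ Finset.range (k-1), x^j :=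
    Finset.sum_nonneg fun j _ => pow_nonneg hx j
  nlinarith [mul_nonneg hε0 (pow_nonneg hx (k-1))]

lemma r_nonneg (hε0 : 0 ≤ ε) (hx : 0 ≤ x) : 0 ≤ r k ε x := by
  unfold r
  have h1 : (0:ℝ) ≤ ∑ j ∈ Finset.range k, x^j :=
    Finset.sum_nonneg fun j _ => pow_nonneg hx j
  nlinarith [mul_nonneg hε0 (pow_nonneg hx k)]

lemma q_pos (hε0 : 0 ≤ ε) (hk : 1 ≤ k) (hkε : k = 1 → 0 < ε) (hx : 0 ≤ x) :
    0 < q k ε x := by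
  rcases Nat.lt_or_ge k 2 with h | h
  · have hk1 : k = 1 := by omega
    subst hk1
    simpa [q] using hkε rfl
  · have h0 : (0:ℕ) ∈ Finset.range (k-1) := by simp; omega
    have h1 : (1:ℝ) ≤ ∑ j ∈ Finset.range (k-1), x^j := by
      have := Finset.single_le_sum (f := fun j => x^j) (fun i _ => pow_nonneg hx i) h0
      simpa using this
    unfold q
    nlinarith [mul_nonneg hε0 (pow_nonneg hx (k-1))]

lemma pow_mul_le (hx : 0 ≤ x) (hxy : x ≤ y) {j m : ℕ} (hj : j ≤ m) :
    x^m * y^j ≤ y^m * x^j := by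
  have hy : 0 ≤ y := hx.trans hxy
  obtain ⟨d, rfl⟩ := Nat.exists_eq_add_of_le hj
  rw [pow_add, pow_add]
  have h := mul_le_mul_of_nonneg_left (pow_le_pow_left₀ hx hxy d)
    (mul_nonneg (pow_nonneg hx j) (pow_nonneg hy j))
  calc x^j * x^d * y^j = x^j*y^j*x^d := by ring
  _ ≤ x^j*y^j*y^d := h
  _ = y^j*y^d*x^j := by ring

lemma gq_cross (hε0 : 0 ≤ ε) (hε1 : ε ≤ 1) (hx : 0 ≤ x) (hxy : x ≤ y) :
    g k ε x * q k ε y ≤ g k ε y * q k ε x := by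
  have hy : 0 ≤ y := hx.trans hxy
  have step1 : x^(k-1) * q k ε y ≤ y^(k-1) * q k ε x := by
    unfold q
    rw [mul_add, mul_add, Finset.mul_sum, Finset.mul_sum]
    refine add_le_add (Finset.sum_le_sum fun j hj =>
      pow_mul_le hx hxy (Finset.mem_range.1 hj).le) (le_of_eq (by ring))
  calc g k ε x * q k ε y = P ε x * (x^(k-1) * q k ε y) := by unfold g; ring
  _ ≤ P ε x * (y^(k-1) * q k ε x) := mul_le_mul_of_nonneg_left step1 (P_nonneg hε0 hε1 hx)
  _ ≤ P ε y * (y^(k-1) * q k ε x) := mul_le_mul_of_nonneg_right (P_mono hε0 hxy)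
      (mul_nonneg (pow_nonneg hy _) (q_nonneg hε0 hx))
  _ = g k ε y * q k ε x := by unfold g; ring

lemma r_eq (hk : 1 ≤ k) : r k ε x = q k ε x + g k ε x := by
  obtain ⟨m, rfl⟩ : ∃ m, k = m + 1 := ⟨k-1, by omega⟩
  simp only [r, q, g, P, Nat.add_sub_cancel, Finset.sum_range_succ]
  ring

lemma G_mono (hε0 : 0 ≤ ε) (hε1 : ε ≤ 1) (hk : 1 ≤ k) (hkε : k = 1 → 0 < ε) :
    MonotoneOn (G k ε) (Icc (0:ℝ) 1) := by
  intro x hx y hy hxy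
  have hqx := q_pos hε0 hk hkε hx.1
  have hqy := q_pos hε0 hk hkε (hx.1.trans hxy)
  have hgx := g_nonneg (k := k) hε0 hε1 hx.1
  have hgy := g_nonneg (k := k) hε0 hε1 (hx.1.trans hxy)
  have hgm := g_mono (k := k) hε0 hε1 hx.1 hxy
  have hdiv : g k ε x / q k ε x ≤ g k ε y / q k ε y :=
    (div_le_div_iff₀ hqx hqy).2 (gq_cross hε0 hε1 hx.1 hxy)
  have hdiv0 : 0 ≤ g k ε x / q k ε x := div_nonneg hgx hqx.le
  have ex : ∀ z : ℝ, 0 < q k ε z →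
      G k ε z = g k ε z + g k ε z * (g k ε z / q k ε z) := by
    intro z hz
    have hzne : q k ε z ≠ 0 := hz.ne'
    simp only [G, r_eq hk]
    field_simp
  rw [ex x hqx, ex y hqy]
  exact add_le_add hgm (mul_le_mul hgm hdiv hdiv0 hgy)

lemma G_nonneg (hε0 : 0 ≤ ε) (hε1 : ε ≤ 1) (hx : 0 ≤ x) : 0 ≤ G k ε x :=
  div_nonneg (mul_nonneg (g_nonneg hε0 hε1 hx) (r_nonneg hε0 hx)) (q_nonneg hε0 hx)

lemma f_eq_G (hx : x ≠ 1) :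
    x ^ (k - 1) * (1 - ε + ε * x) *
      ((1 - x ^ k * (1 - ε + ε * x)) / (1 - x ^ (k - 1) * (1 - ε + ε * x)))
      = G k ε x := by
  have h1 : (1-x) * q k ε x = 1 - x^(k-1) * P ε x := by
    simp only [q, P]; linear_combination -(geom_sum_mul x (k-1))
  have h2 : (1-x) * r k ε x = 1 - x^k * P ε x := by
    simp only [r, P]; linear_combination -(geom_sum_mul x k)
  have hne : (1:ℝ) - x ≠ 0 := sub_ne_zero.2 (Ne.symm hx)
  rw [show (1 - ε + ε*x) = P ε x from rfl, ← h1, ← h2,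
    mul_div_mul_left _ _ hne]
  simp only [G, g, mul_div_assoc]

end CMQAux
/-- **Integral bounds on the rank-error sum (Theorem 3 (iii)).**
For `n ≥ 1` and real `c > 1`, with `k = ⌊c⌋`, `ε = c - k` and
`f_c(x) = x^{k-1}(1-ε+εx)·(1 - x^k(1-ε+εx))/(1 - x^{k-1}(1-ε+εx))`,
`n·∫_0^1 f_c - c/(c-1) ≤ ∑_{i=1}^{n-1} f_c(i/n) ≤ n·∫_0^1 f_c`,
the integral being over the open interval `(0,1)`. -/
theorem c_multiqueue_integral_bounds (n : ℕ) (hn : 1 ≤ n)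
    (c : ℝ) (hc : 1 < c) (k : ℕ) (hk : k = ⌊c⌋₊) (ε : ℝ) (hε : ε = c - k)
    (f : ℝ → ℝ)
    (hf : ∀ x : ℝ, f x = x ^ (k - 1) * (1 - ε + ε * x) *
      ((1 - x ^ k * (1 - ε + ε * x)) / (1 - x ^ (k - 1) * (1 - ε + ε * x)))) :
    n * (∫ x in Set.Ioo (0 : ℝ) 1, f x) - c / (c - 1)
        ≤ ∑ i ∈ Finset.Icc 1 (n - 1), f ((i : ℝ) / n) ∧
      ∑ i ∈ Finset.Icc 1 (n - 1), f ((i : ℝ) / n)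
        ≤ n * (∫ x in Set.Ioo (0 : ℝ) 1, f x) := by
  have hc0 : (0:ℝ) ≤ c := by linarith
  have hk1 : 1 ≤ k := by
    rw [hk]; exact Nat.le_floor (by exact_mod_cast hc.le)
  have hkc : (k:ℝ) ≤ c := by rw [hk]; exact Nat.floor_le hc0
  have hck : c < (k:ℝ) + 1 := by rw [hk]; exact Nat.lt_floor_add_one c
  have hε0 : 0 ≤ ε := by rw [hε]; linarith
  have hε1 : ε < 1 := by rw [hε]; linarith
  have hkε : k = 1 → 0 < ε := by intro h; rw [hε, h]; push_cast; linarith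
  have hc1 : (0:ℝ) < c - 1 := by linarith
  have hn1 : (1:ℝ) ≤ (n:ℝ) := by exact_mod_cast hn
  have hn0 : (0:ℝ) < (n:ℝ) := by linarith
  set I : ℝ := ∫ x in Set.Ioo (0:ℝ) 1, f x with hI
  have hmono := CMQAux.G_mono (k := k) (ε := ε) hε0 hε1.le hk1 hkε
  have hfG : ∀ x ∈ Set.Ioo (0:ℝ) 1, f x = CMQAux.G k ε x := fun x hx => by
    rw [hf x]; exact CMQAux.f_eq_G hx.2.ne
  have hG1 : CMQAux.G k ε 1 = c / (c - 1) := by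
    simp [CMQAux.G, CMQAux.g, CMQAux.P, CMQAux.q, CMQAux.r]
    rw [Nat.cast_sub hk1, hε]
    push_cast
    congr 1 <;> ring
  have hGle : ∀ x ∈ Set.Icc (0:ℝ) 1, CMQAux.G k ε x ≤ c / (c - 1) := fun x hx => by
    rw [← hG1]
    exact hmono hx (by norm_num) hx.2
  have hG0 : ∀ x ∈ Set.Icc (0:ℝ) 1, 0 ≤ CMQAux.G k ε x := fun x hx =>
    CMQAux.G_nonneg hε0 hε1.le hx.1
  have hIeq : I = ∫ x in (0:ℝ)..1, CMQAux.G k ε x := by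
    rw [hI, MeasureTheory.setIntegral_congr_fun measurableSet_Ioo hfG,
      ← MeasureTheory.integral_Ioc_eq_integral_Ioo,
      ← intervalIntegral.integral_of_le zero_le_one]
  set F : ℝ → ℝ := fun t => CMQAux.G k ε (t / n) with hFdef
  have hmem : ∀ t ∈ Set.Icc (0:ℝ) (n:ℝ), t / n ∈ Set.Icc (0:ℝ) 1 := by
    intro t ht
    constructor
    · exact div_nonneg ht.1 hn0.le
    · rw [div_le_one hn0]; exact ht.2
  have hFmono : MonotoneOn F (Set.Icc (0:ℝ) (n:ℝ)) := by
    intro a ha b hb hab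
    exact hmono (hmem a ha) (hmem b hb) (by gcongr)
  have hFint : ∀ a b : ℝ, 0 ≤ a → a ≤ b → b ≤ n → IntervalIntegrable F volume a b := by
    intro a b ha hab hbn
    apply MonotoneOn.intervalIntegrable
    apply hFmono.mono
    rw [Set.uIcc_of_le hab]
    exact Set.Icc_subset_Icc ha hbn
  have hint_total : ∫ t in (0:ℝ)..(n:ℝ), F t = n * ∫ x in (0:ℝ)..1, CMQAux.G k ε x := by
    rw [hFdef, intervalIntegral.integral_comp_div (f := CMQAux.G k ε) hn0.ne']
    rw [zero_div, div_self hn0.ne', smul_eq_mul]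
  have hn1R : (0:ℝ) ≤ (n:ℝ) - 1 := by linarith
  have hcast : ((n - 1 : ℕ) : ℝ) = (n:ℝ) - 1 := by
    push_cast [Nat.cast_sub hn]; ring
  have hsum : ∑ i ∈ Finset.Icc 1 (n-1), f ((i:ℝ)/n)
      = ∑ i ∈ Finset.range (n-1), CMQAux.G k ε (((1 + i : ℕ):ℝ)/n) := by
    rw [← Finset.Ico_add_one_right_eq_Icc]
    have hsucc : n - 1 + 1 = n := by omega
    rw [hsucc, Finset.sum_Ico_eq_sum_range]
    apply Finset.sum_congr rfl
    intro i hi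
    have hi' : i < n - 1 := Finset.mem_range.1 hi
    have hm : ((1 + i : ℕ):ℝ)/n ∈ Set.Ioo (0:ℝ) 1 := by
      constructor
      · positivity
      · rw [div_lt_one hn0]
        exact_mod_cast (by omega : 1 + i < n)
    rw [hfG _ hm]
  have hFval : ∀ i : ℕ, F (1 + (i:ℝ)) = CMQAux.G k ε (((1 + i : ℕ):ℝ)/n) := by
    intro i
    rw [hFdef]
    push_cast
    ring_nf
  have hub : ∑ i ∈ Finset.range (n-1), CMQAux.G k ε (((1 + i : ℕ):ℝ)/n)
      ≤ ∫ t in (1:ℝ)..(n:ℝ), F t := by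
    have hm : MonotoneOn F (Set.Icc (1:ℝ) (1 + ((n-1:ℕ):ℝ))) := by
      apply hFmono.mono
      apply Set.Icc_subset_Icc (by norm_num)
      rw [hcast]; linarith
    have h := hm.sum_le_integral
    rw [hcast] at h
    have he : (1:ℝ) + ((n:ℝ) - 1) = (n:ℝ) := by ring
    rw [he] at h
    refine le_trans (le_of_eq ?_) h
    exact Finset.sum_congr rfl fun i _ => (hFval i).symm
  have hlb1 : ∫ t in (0:ℝ)..((n:ℝ)-1), F t
      ≤ ∑ i ∈ Finset.range (n-1), CMQAux.G k ε (((1 + i : ℕ):ℝ)/n) := by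
    have hm : MonotoneOn F (Set.Icc (0:ℝ) (0 + ((n-1:ℕ):ℝ))) := by
      apply hFmono.mono
      apply Set.Icc_subset_Icc le_rfl
      rw [hcast]; linarith
    have h := hm.integral_le_sum
    rw [hcast] at h
    have he : (0:ℝ) + ((n:ℝ) - 1) = (n:ℝ) - 1 := by ring
    rw [he] at h
    refine le_trans h (le_of_eq ?_)
    refine Finset.sum_congr rfl fun i _ => ?_
    have : (0:ℝ) + ((i + 1 : ℕ):ℝ) = 1 + (i:ℝ) := by push_cast; ring
    rw [this, hFval i]
  have hlb2 : ∫ t in ((n:ℝ)-1)..(n:ℝ), F t ≤ c / (c - 1) := by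
    have hconst : ∫ _ in ((n:ℝ)-1)..(n:ℝ), (c/(c-1)) = c/(c-1) := by
      rw [intervalIntegral.integral_const]
      norm_num
    rw [← hconst]
    apply intervalIntegral.integral_mono_on (by linarith)
      (hFint (n-1) n hn1R (by linarith) le_rfl) intervalIntegrable_const
    intro t ht
    exact hGle _ (hmem t ⟨le_trans hn1R ht.1, ht.2⟩)
  have hsplit : (∫ t in (0:ℝ)..((n:ℝ)-1), F t) + ∫ t in ((n:ℝ)-1)..(n:ℝ), F t
      = ∫ t in (0:ℝ)..(n:ℝ), F t :=
    intervalIntegral.integral_add_adjacent_intervals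
      (hFint 0 (n-1) le_rfl hn1R (by linarith))
      (hFint (n-1) n hn1R (by linarith) le_rfl)
  have hadd : (∫ t in (0:ℝ)..(1:ℝ), F t) + ∫ t in (1:ℝ)..(n:ℝ), F t
      = ∫ t in (0:ℝ)..(n:ℝ), F t :=
    intervalIntegral.integral_add_adjacent_intervals
      (hFint 0 1 le_rfl zero_le_one hn1)
      (hFint 1 n zero_le_one hn1 le_rfl)
  have h01 : 0 ≤ ∫ t in (0:ℝ)..(1:ℝ), F t := by
    apply intervalIntegral.integral_nonneg zero_le_one
    intro u hu
    exact hG0 _ (hmem u ⟨hu.1, le_trans hu.2 hn1⟩)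
  have hnI : (n:ℝ) * I = ∫ t in (0:ℝ)..(n:ℝ), F t := by
    rw [hIeq, hint_total]
  constructor
  · rw [hsum]
    linarith [hlb1, hlb2, hsplit, hnI]
  · rw [hsum]
    linarith [hub, h01, hadd, hnI]
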